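/- Let A be a unital subalgebra of a unital C*-algebra B with factorization: every positive invertible b ∈ B equals a*a for some a ∈ A invertible in A. Then every invertible b ∈ B can be written b = u|a| where a ∈ A is invertible in A, u is a unitary in B, and u may be taken to be the unitary in the polar decomposition of b. -/

import Mathlib

/-- If a unital subalgebra `A` of a unital C*-algebra `B` has factorization, then every
invertible `b ∈ B` can be written `b = u * |a|` with `a ∈ A` invertible in `A` and `u` a
unitary of `B`, where `u` may be taken to be the unitary of the polar decomposition of `b`
(i.e. `b = u * |b|` as well). -/
theorem polar_decomposition_with_modulus_from_A
    {B : Type*} [CStarAlgebra B] [PartialOrder B] [StarOrderedRing B]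
    (A : Subalgebra ℂ B)
    (hfac : ∀ b : B, 0 ≤ b → IsUnit b →
      ∃ a ∈ A, (∃ c ∈ A, a * c = 1 ∧ c * a = 1) ∧ b = star a * a) :
    ∀ b : B, IsUnit b →
      ∃ a ∈ A, (∃ c ∈ A, a * c = 1 ∧ c * a = 1) ∧
        ∃ u ∈ unitary B, b = u * CFC.sqrt (star a * a) ∧ b = u * CFC.sqrt (star b * b) := by
  intro b hb
  have hpos : (0 : B) ≤ star b * b := star_mul_self_nonneg b
  have hunit : IsUnit (star b * b) := (hb.star).mul hb
  obtain ⟨a, haA, hainv, ha⟩ := hfac (star b * b) hpos hunit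
  refine ⟨a, haA, hainv, ?_⟩
  set s := CFC.sqrt (star b * b) with hs
  have hsnn : (0 : B) ≤ s := CFC.sqrt_nonneg _
  have hss : s * s = star b * b := by
    have := CFC.sq_sqrt (star b * b) hpos
    simpa [sq] using this
  -- s is a unit
  obtain ⟨t, ht⟩ := hunit
  have hsl : (↑t⁻¹ * s) * s = 1 := by
    rw [mul_assoc, hss, ← ht, Units.inv_mul]
  have hsr : s * (s * ↑t⁻¹) = 1 := by
    rw [← mul_assoc, hss, ← ht, Units.mul_inv]
  have hcomm : (↑t⁻¹ * s : B) = s * ↑t⁻¹ := by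
    calc (↑t⁻¹ * s : B) = ↑t⁻¹ * s * (s * (s * ↑t⁻¹)) := by rw [hsr, mul_one]
      _ = (↑t⁻¹ * s * s) * (s * ↑t⁻¹) := by rw [mul_assoc, mul_assoc, mul_assoc]
      _ = s * ↑t⁻¹ := by rw [← mul_assoc, hsl, one_mul]
  have hsu : IsUnit s := ⟨⟨s, s * ↑t⁻¹, hsr, by rw [← hcomm, hsl]⟩, rfl⟩
  obtain ⟨S, hS⟩ := hsu
  have hssa : star s = s := (IsSelfAdjoint.of_nonneg hsnn)
  set u := b * ↑S⁻¹ with hu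
  have hSinv : (↑S⁻¹ : B) * s = 1 := by rw [← hS, Units.inv_mul]
  have hSinv' : s * (↑S⁻¹ : B) = 1 := by rw [← hS, Units.mul_inv]
  have hstarSinv : star (↑S⁻¹ : B) = ↑S⁻¹ := by
    have h1 : star (↑S⁻¹ : B) * s = 1 := by
      have := congrArg star hSinv'
      simpa [star_mul, hssa] using this
    calc star (↑S⁻¹ : B) = star ↑S⁻¹ * (s * ↑S⁻¹) := by rw [hSinv', mul_one]
      _ = (star ↑S⁻¹ * s) * ↑S⁻¹ := by rw [mul_assoc]
      _ = ↑S⁻¹ := by rw [h1, one_mul]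
  have hu1 : star u * u = 1 := by
    rw [hu, star_mul, hstarSinv]
    calc (↑S⁻¹ : B) * star b * (b * ↑S⁻¹) = ↑S⁻¹ * (star b * b) * ↑S⁻¹ := by noncomm_ring
      _ = ↑S⁻¹ * (s * s) * ↑S⁻¹ := by rw [hss]
      _ = (↑S⁻¹ * s) * (s * ↑S⁻¹) := by noncomm_ring
      _ = 1 := by rw [hSinv, hSinv', one_mul]
  have hu2 : u * star u = 1 := by
    obtain ⟨U, hU⟩ := hb.mul (S⁻¹ : Bˣ).isUnit
    have hUu : (↑U : B) = u := hU
    have hsu : star u = ↑U⁻¹ := by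
      calc star u = star u * (↑U * ↑U⁻¹) := by rw [Units.mul_inv, mul_one]
        _ = (star u * ↑U) * ↑U⁻¹ := by rw [mul_assoc]
        _ = (star u * u) * ↑U⁻¹ := by rw [hUu]
        _ = ↑U⁻¹ := by rw [hu1, one_mul]
    rw [hsu, ← hUu, Units.mul_inv]
  have hub : u * s = b := by
    rw [hu, mul_assoc, hSinv, mul_one]
  refine ⟨u, Unitary.mem_iff.mpr ⟨hu1, hu2⟩, ?_, hub.symm⟩
  rw [← ha, hub]
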